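/- arXiv:0809.1578 — 3 statements merged into one kernel-verified Lean document; each statement's English description precedes it below -/
import Mathlib

section
/- Under the heterogeneous SI model ds/dt(t,ω) = -β(ω) s(t,ω) I(t) with s(0,ω) = S₀ p₀(ω), setting q(t) = -∫₀^t I(τ) dτ and S(t) = ∫_Ω s(t,ω) dω, one has the first integral S(t)/S₀ = M(q(t)), where M(λ) = ∫_Ω e^{λ β(ω)} p₀(ω) dω is the moment generating function of β under p₀ (assuming all integrals converge). -/
open Real MeasureTheory intervalIntegral

/-- First integral of the heterogeneous SI model: with `q(t) = -∫₀ᵗ I` and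
`S(t) = ∫ s(t,ω) dω`, one has `S(t)/S₀ = M(q(t))` where `M` is the mgf of `β` under `p₀`. -/
theorem heterogeneous_SI_first_integral {Ω : Type*} [MeasurableSpace Ω] (μ : Measure Ω)
    [IsProbabilityMeasure μ]
    (β : Ω → ℝ) (hβmeas : Measurable β) (hβ : ∀ ω, 0 ≤ β ω)
    (p₀ : Ω → ℝ) (hp₀ : ∀ ω, 0 ≤ p₀ ω) (hp₀int : ∫ ω, p₀ ω ∂μ = 1)
    (S₀ : ℝ) (hS₀ : 0 < S₀) (I : ℝ → ℝ) (hI : Continuous I) (hInn : ∀ t, 0 ≤ I t)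
    (s : ℝ → Ω → ℝ)
    (hode : ∀ t ω, HasDerivAt (fun u => s u ω) (-β ω * s t ω * I t) t)
    (hinit : ∀ ω, s 0 ω = S₀ * p₀ ω)
    (hint : ∀ t, Integrable (fun ω => s t ω) μ)
    (hmgf : ∀ lam : ℝ, lam ≤ 0 → Integrable (fun ω => Real.exp (lam * β ω) * p₀ ω) μ)
    (q S M : ℝ → ℝ)
    (hq : ∀ t, q t = -∫ τ in (0:ℝ)..t, I τ)
    (hS : ∀ t, S t = ∫ ω, s t ω ∂μ)
    (hM : ∀ lam, M lam = ∫ ω, Real.exp (lam * β ω) * p₀ ω ∂μ) :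
    ∀ t, 0 ≤ t → S t / S₀ = M (q t) := by
  intro t ht
  set F : ℝ → ℝ := fun u => ∫ τ in (0:ℝ)..u, I τ with hFdef
  have hFderiv : ∀ u, HasDerivAt F (I u) u := fun u =>
    intervalIntegral.integral_hasDerivAt_right (hI.intervalIntegrable 0 u)
      (hI.stronglyMeasurableAtFilter _ _) hI.continuousAt
  have key : ∀ ω, s t ω = S₀ * (Real.exp (q t * β ω) * p₀ ω) := by
    intro ω
    have hg : ∀ u, HasDerivAt (fun v => s v ω * Real.exp (β ω * F v)) 0 u := by
      intro u
      have h2 : HasDerivAt (fun v => Real.exp (β ω * F v))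
          (Real.exp (β ω * F u) * (β ω * I u)) u := by
        have := (((hFderiv u).const_mul (β ω)).exp)
        convert this using 1
      have h : HasDerivAt (fun v => s v ω * Real.exp (β ω * F v)) _ u := (hode u ω).mul h2
      convert h using 1
      ring
    have hconst : s t ω * Real.exp (β ω * F t) = s 0 ω * Real.exp (β ω * F 0) := by
      have := is_const_of_deriv_eq_zero (f := fun v => s v ω * Real.exp (β ω * F v))
        (fun u => (hg u).differentiableAt) (fun u => (hg u).deriv) t 0
      simpa using this
    have hF0 : F 0 = 0 := intervalIntegral.integral_same
    rw [hF0, mul_zero, Real.exp_zero, mul_one, hinit] at hconst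
    have hexp : Real.exp (β ω * F t) ≠ 0 := Real.exp_ne_zero _
    have hs : s t ω = (S₀ * p₀ ω) / Real.exp (β ω * F t) := (eq_div_iff hexp).mpr hconst
    rw [hs, hq t]
    rw [div_eq_iff hexp]
    have : (-F t) * β ω = -(β ω * F t) := by ring
    rw [this, Real.exp_neg]
    field_simp
  have hint' : (∫ ω, s t ω ∂μ) = S₀ * ∫ ω, Real.exp (q t * β ω) * p₀ ω ∂μ := by
    simp_rw [key]
    rw [MeasureTheory.integral_const_mul]
  rw [hS, hM, hint']
  field_simp
end

section
/- Let p₀ be the gamma density with shape k > 0 and rate ν > 0, let I : [0,T) → ℝ be continuous and nonnegative, and define S(t) = S₀ ∫₀^∞ p₀(ω) e^{-ω ∫₀^t I(τ)dτ} dω. Then S is differentiable and satisfies dS/dt = -(k/ν) S(t) (S(t)/S₀)^{1/k} I(t). That is, the aggregated dynamics of a gamma-distributed susceptible population obey a power-law transmission function with exponent p = 1 + 1/k. -/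
open Real MeasureTheory Set intervalIntegral

/-- Corollary 1: with gamma-distributed susceptibility, the aggregated susceptible population
obeys the power-law ODE `dS/dt = -(k/ν) S (S/S₀)^(1/k) I(t)`. -/
theorem gamma_heterogeneous_SI_power_law (k ν S₀ T : ℝ) (hk : 0 < k) (hν : 0 < ν)
    (hS₀ : 0 < S₀) (hT : 0 < T)
    (p₀ : ℝ → ℝ)
    (hp₀ : ∀ ω > (0:ℝ), p₀ ω = ν ^ k / Real.Gamma k * ω ^ (k - 1) * Real.exp (-ν * ω))
    (I : ℝ → ℝ) (hI : Continuous I) (hInn : ∀ t, 0 ≤ I t)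
    (S : ℝ → ℝ)
    (hS : ∀ t, S t = S₀ * ∫ ω in Ioi (0:ℝ), p₀ ω * Real.exp (-ω * ∫ τ in (0:ℝ)..t, I τ)) :
    ∀ t ∈ Ico (0:ℝ) T,
      HasDerivAt S (-(k / ν * S t * (S t / S₀) ^ (1 / k) * I t)) t := by
  intro t ht
  set J : ℝ → ℝ := fun s => ∫ τ in (0:ℝ)..s, I τ with hJdef
  have hJd : ∀ s, HasDerivAt J (I s) s := fun s =>
    (hI.integral_hasStrictDerivAt 0 s).hasDerivAt
  have hJcont : Continuous J :=
    continuous_iff_continuousAt.mpr fun s => (hJd s).continuousAt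
  -- positivity of ν + J t
  have hJt : 0 ≤ J t := intervalIntegral.integral_nonneg ht.1 (fun τ _ => hInn τ)
  have hct : 0 < ν + J t := by linarith
  -- closed form wherever ν + J s > 0
  have hclosed : ∀ s, 0 < ν + J s → S s = S₀ * (ν ^ k * (ν + J s) ^ (-k)) := by
    intro s hc
    have hint : (∫ ω in Ioi (0:ℝ), p₀ ω * Real.exp (-ω * J s))
        = ν ^ k / Real.Gamma k * ((1 / (ν + J s)) ^ k * Real.Gamma k) := by
      rw [← Real.integral_rpow_mul_exp_neg_mul_Ioi hk hc,
        ← MeasureTheory.integral_const_mul]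
      refine setIntegral_congr_fun measurableSet_Ioi fun ω hω => ?_
      simp only [hp₀ ω hω, mul_assoc, ← Real.exp_add]
      congr 3
      ring
    rw [hS s, hint]
    have hΓ : Real.Gamma k ≠ 0 := (Real.Gamma_pos_of_pos hk).ne'
    have hpow : (1 / (ν + J s)) ^ k = (ν + J s) ^ (-k) := by
      rw [one_div, ← Real.rpow_neg_one, ← Real.rpow_mul hc.le, neg_one_mul]
    rw [hpow]
    field_simp
  -- the closed form function
  set f : ℝ → ℝ := fun s => S₀ * (ν ^ k * (ν + J s) ^ (-k)) with hfdef
  have hev : S =ᶠ[nhds t] f := by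
    have hopen : IsOpen {s : ℝ | 0 < ν + J s} :=
      isOpen_lt continuous_const (continuous_const.add hJcont)
    filter_upwards [hopen.mem_nhds hct] with s hs using hclosed s hs
  have hfd : HasDerivAt f (S₀ * ν ^ k * (I t * (-k) * (ν + J t) ^ (-k - 1))) t := by
    have h1 : HasDerivAt (fun s => ν + J s) (I t) t := (hJd t).const_add ν
    have h2 : HasDerivAt (fun s => (ν + J s) ^ (-k))
        (I t * (-k) * (ν + J t) ^ (-k - 1)) t :=
      h1.rpow_const (Or.inl hct.ne')
    have := h2.const_mul (S₀ * ν ^ k)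
    simpa [mul_assoc] using this
  have hSd : HasDerivAt S (S₀ * ν ^ k * (I t * (-k) * (ν + J t) ^ (-k - 1))) t :=
    hfd.congr_of_eventuallyEq hev
  set c := ν + J t with hcdef
  have hc : 0 < c := hct
  have hSt : S t = S₀ * (ν ^ k * c ^ (-k)) := hclosed t hct
  have h1 : S t / S₀ = ν ^ k * c ^ (-k) := by
    rw [hSt]; field_simp
  have h2 : (S t / S₀) ^ (1 / k) = ν / c := by
    rw [h1]
    have : ν ^ k * c ^ (-k) = (ν / c) ^ k := by
      rw [Real.div_rpow hν.le hc.le, Real.rpow_neg hc.le, div_eq_mul_inv]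
    rw [this, ← Real.rpow_mul (div_nonneg hν.le hc.le)]
    rw [mul_one_div, div_self hk.ne', Real.rpow_one]
  have h3 : c ^ (-k - 1) = c ^ (-k) / c := by
    rw [sub_eq_add_neg, Real.rpow_add hc, Real.rpow_neg_one, div_eq_mul_inv]
  have hgoal : -(k / ν * S t * (S t / S₀) ^ (1 / k) * I t)
      = S₀ * ν ^ k * (I t * -k * c ^ (-k - 1)) := by
    rw [h2, hSt, h3]
    field_simp
  rw [hgoal]; exact hSd
end

section
/- Let M : (-∞, 0] → (0, 1] be C¹ with M(0) = 1, M' > 0, and let S₀ > 0. Suppose (S, I, q) : [0,T) → (0,∞) × (0,∞) × (-∞,0] is a C¹ solution of dS/dt = -φ(q) S I, dI/dt = φ(q) S I, dq/dt = -I, with S(0)=S₀, q(0)=0, where φ(λ) = M'(λ)/M(λ). Then S(t) = S₀ M(q(t)) for all t ∈ [0,T), and consequently dS/dt = -h(S) I where h(S) = S₀ M'(M⁻¹(S/S₀)). -/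
open Real Set

/-- Proposition 1: the reduced heterogeneous SI system possesses the first integral
`S(t) = S₀ M(q(t))`, so `dS/dt = -h(S) I` with `h(S) = S₀ M'(M⁻¹(S/S₀))`. -/
theorem SI_reduction_first_integral (M : ℝ → ℝ)
    (hM1 : M 0 = 1) (hMsmooth : ∀ lam ≤ (0:ℝ), DifferentiableAt ℝ M lam)
    (hM' : ∀ lam ≤ (0:ℝ), 0 < deriv M lam)
    (hMrange : ∀ lam ≤ (0:ℝ), M lam ∈ Ioc (0:ℝ) 1)
    (S₀ T : ℝ) (hS₀ : 0 < S₀)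
    (φ : ℝ → ℝ) (hφ : ∀ lam, φ lam = deriv M lam / M lam)
    (S I q : ℝ → ℝ)
    (hSpos : ∀ t ∈ Ico (0:ℝ) T, 0 < S t) (hIpos : ∀ t ∈ Ico (0:ℝ) T, 0 < I t)
    (hqle : ∀ t ∈ Ico (0:ℝ) T, q t ≤ 0)
    (hS0 : S 0 = S₀) (hq0 : q 0 = 0)
    (hSode : ∀ t ∈ Ico (0:ℝ) T, HasDerivAt S (-(φ (q t) * S t * I t)) t)
    (hIode : ∀ t ∈ Ico (0:ℝ) T, HasDerivAt I (φ (q t) * S t * I t) t)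
    (hqode : ∀ t ∈ Ico (0:ℝ) T, HasDerivAt q (-I t) t) :
    ∀ t ∈ Ico (0:ℝ) T,
      S t = S₀ * M (q t) ∧
      HasDerivAt S
        (-(S₀ * deriv M (Function.invFunOn M (Iic (0:ℝ)) (S t / S₀)) * I t)) t := by
  -- M is strictly monotone, hence injective, on (-∞,0]
  have hMcont : ContinuousOn M (Iic (0:ℝ)) := fun x hx =>
    ((hMsmooth x hx).continuousAt).continuousWithinAt
  have hMono : StrictMonoOn M (Iic (0:ℝ)) := by
    apply strictMonoOn_of_deriv_pos (convex_Iic 0) hMcont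
    intro x hx
    rw [interior_Iic] at hx
    exact hM' x (le_of_lt hx)
  have hInj : Set.InjOn M (Iic (0:ℝ)) := hMono.injOn
  -- the abstract first integral g = S / M ∘ q
  set g : ℝ → ℝ := fun t => S t / M (q t) with hg_def
  have hgderiv : ∀ t ∈ Ico (0:ℝ) T, HasDerivAt g 0 t := by
    intro t ht
    have hq := hqle t ht
    have hMne : M (q t) ≠ 0 := ne_of_gt (hMrange _ hq).1
    have hMd : HasDerivAt M (deriv M (q t)) (q t) := (hMsmooth _ hq).hasDerivAt
    have hcomp : HasDerivAt (fun s => M (q s)) (deriv M (q t) * (-I t)) t :=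
      HasDerivAt.comp t hMd (hqode t ht)
    have hdiv := (hSode t ht).div hcomp hMne
    convert hdiv using 1
    · rfl
    · rfl
    · rfl
    rw [hφ]
    field_simp
    ring
  -- constancy of g on [0,T)
  have hgconst : ∀ t ∈ Ico (0:ℝ) T, g t = g 0 := by
    intro t ht
    obtain ⟨ht0, htT⟩ := ht
    have hsub : Icc (0:ℝ) t ⊆ Ico (0:ℝ) T := fun x hx =>
      ⟨hx.1, lt_of_le_of_lt hx.2 htT⟩
    have hcont : ContinuousOn g (Icc (0:ℝ) t) := fun x hx =>
      ((hgderiv x (hsub hx)).continuousAt).continuousWithinAt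
    have hder : ∀ x ∈ Ico (0:ℝ) t, HasDerivWithinAt g 0 (Ici x) x := fun x hx =>
      (hgderiv x (hsub ⟨hx.1, le_of_lt hx.2⟩)).hasDerivWithinAt
    exact constant_of_has_deriv_right_zero hcont hder t ⟨ht0, le_refl t⟩
  intro t ht
  have hq := hqle t ht
  have hMne : M (q t) ≠ 0 := ne_of_gt (hMrange _ hq).1
  have hg0 : g 0 = S₀ := by simp [hg_def, hS0, hq0, hM1]
  have hfirst : S t = S₀ * M (q t) := by
    have := hgconst t ht
    rw [hg0, hg_def] at this
    field_simp at this
    linarith [this]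
  refine ⟨hfirst, ?_⟩
  have hinv : Function.invFunOn M (Iic (0:ℝ)) (S t / S₀) = q t := by
    have : S t / S₀ = M (q t) := by
      rw [hfirst]; field_simp
    rw [this]
    exact hInj.leftInvOn_invFunOn hq
  rw [hinv]
  have := hSode t ht
  convert this using 1
  rw [hφ, hfirst]
  field_simp
end
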